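/- Let K be a field with a surjective discrete valuation v : K* → ℤ, with valuation ring O, uniformizer π, and residue field k. Let d ≥ 2 and let q = ⟨a_1,...,a_n⟩_d be a diagonal degree-d form with coefficients a_i ∈ O whose reduction mod π has no nontrivial zero over k. Then the form q' = q(x⃗_0) + π·q(x⃗_1) + ⋯ + π^{d-1}·q(x⃗_{d-1}) in dn variables has no nontrivial zero over K. -/

import Mathlib

open IsLocalRing in
theorem stmt_11 (O K : Type*) [CommRing O] [IsDomain O] [IsDiscreteValuationRing O]
    [Field K] [Algebra O K] [IsFractionRing O K]
    (π : O) (hπ : Irreducible π)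
    (d : ℕ) (hd : 2 ≤ d) (n : ℕ) (a : Fin n → O)
    (hres : ∀ x : Fin n → ResidueField O, x ≠ 0 →
      ∑ j, residue O (a j) * x j ^ d ≠ 0) :
    ∀ y : Fin d × Fin n → K, y ≠ 0 →
      ∑ ij : Fin d × Fin n,
        algebraMap O K π ^ (ij.1 : ℕ) * algebraMap O K (a ij.2) * y ij ^ d ≠ 0 := by
  classical
  intro y hy hsum
  have hπ0 : π ≠ 0 := hπ.ne_zero
  have hmax : maximalIdeal O = Ideal.span {π} :=
    (IsDiscreteValuationRing.irreducible_iff_uniformizer π).mp hπ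
  have hdvd_res : ∀ r : O, π ∣ r ↔ residue O r = 0 := by
    intro r
    rw [IsLocalRing.residue_eq_zero_iff, hmax, Ideal.mem_span_singleton]
  -- Lemma A: a primitive vector has unit value
  have lemA : ∀ x : Fin n → O, (∃ j, ¬ π ∣ x j) → ¬ π ∣ ∑ j, a j * x j ^ d := by
    rintro x ⟨j0, hj0⟩ hdvd
    rw [hdvd_res] at hdvd
    have hx : (fun j => residue O (x j)) ≠ 0 := by
      intro h
      exact hj0 ((hdvd_res (x j0)).mpr (congrFun h j0))
    apply hres _ hx
    rw [← hdvd, map_sum]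
    simp [map_mul, map_pow]
  -- the integral equation predicate
  set E : (Fin d × Fin n → O) → Prop :=
    fun z => ∑ ij : Fin d × Fin n, π ^ (ij.1 : ℕ) * a ij.2 * z ij ^ d = 0 with hE
  -- key: any solution has all coordinates divisible by π
  have key : ∀ z : Fin d × Fin n → O, E z → ∀ ij, π ∣ z ij := by
    intro z hz
    have hz' : ∑ i : Fin d, π ^ (i : ℕ) * ∑ j, a j * z (i, j) ^ d = 0 := by
      rw [hE] at hz
      rw [← hz, Fintype.sum_prod_type]
      congr 1
      funext i
      rw [Finset.mul_sum]
      congr 1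
      funext j
      ring
    suffices H : ∀ m : ℕ, ∀ i : Fin d, (i : ℕ) = m → ∀ j, π ∣ z (i, j) by
      rintro ⟨i, j⟩
      exact H i i rfl j
    intro m
    induction m using Nat.strong_induction_on with
    | _ m IH =>
      intro i him j
      have hqi : π ∣ ∑ j, a j * z (i, j) ^ d := by
        -- π^(m+1) divides every other block term
        have hterm : ∀ i' : Fin d, i' ≠ i →
            π ^ (m + 1) ∣ π ^ (i' : ℕ) * ∑ j, a j * z (i', j) ^ d := by
          intro i' hi'
          rcases lt_or_ge (i' : ℕ) m with h | h
          · -- lower block: all coordinates divisible by π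
            have hdvd : ∀ j, π ∣ z (i', j) := IH (i' : ℕ) (him ▸ h) i' rfl
            have hdq : π ^ d ∣ ∑ j, a j * z (i', j) ^ d := by
              apply Finset.dvd_sum
              intro j' _
              exact Dvd.dvd.mul_left (pow_dvd_pow_of_dvd (hdvd j') d) _
            have hmd : m < d := him ▸ i.2
            have h1 : π ^ (m + 1) ∣ π ^ d := pow_dvd_pow _ hmd
            exact Dvd.dvd.mul_left (h1.trans hdq) _
          · have h2 : (i' : ℕ) ≠ m := fun hc => hi' (Fin.ext (by omega))
            have h1 : π ^ (m + 1) ∣ π ^ (i' : ℕ) := pow_dvd_pow _ (by omega)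
            exact Dvd.dvd.mul_right h1 _
        have hmain : π ^ (m + 1) ∣ π ^ m * ∑ j, a j * z (i, j) ^ d := by
          have hsplit :
              π ^ m * ∑ j, a j * z (i, j) ^ d =
                - ∑ i' ∈ Finset.univ.erase i, π ^ (i' : ℕ) * ∑ j, a j * z (i', j) ^ d := by
            have h3 := Finset.add_sum_erase Finset.univ
              (fun i' : Fin d => π ^ (i' : ℕ) * ∑ j, a j * z (i', j) ^ d) (Finset.mem_univ i)
            rw [← him]
            linear_combination h3 + hz'
          rw [hsplit, dvd_neg]
          apply Finset.dvd_sum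
          intro i' hi'
          exact hterm i' (Finset.ne_of_mem_erase hi')
        have : π ^ m * π ∣ π ^ m * ∑ j, a j * z (i, j) ^ d := by
          rwa [← pow_succ]
        exact (mul_dvd_mul_iff_left (pow_ne_zero m hπ0)).mp this
      by_contra hcon
      exact lemA _ ⟨j, hcon⟩ hqi
  -- hence all powers of π divide every coordinate
  have keyk : ∀ k : ℕ, ∀ z : Fin d × Fin n → O, E z → ∀ ij, π ^ k ∣ z ij := by
    intro k
    induction k with
    | zero => intro z _ ij; simp
    | succ k IHk =>
      intro z hz ij
      choose w hw using key z hz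
      have hEw : E w := by
        have hzz : π ^ d * (∑ ij : Fin d × Fin n, π ^ (ij.1 : ℕ) * a ij.2 * w ij ^ d) = 0 := by
          rw [Finset.mul_sum]
          rw [hE] at hz
          rw [← hz]
          congr 1
          funext ij'
          rw [hw ij']
          ring
        rcases mul_eq_zero.mp hzz with h | h
        · exact absurd h (pow_ne_zero d hπ0)
        · exact h
      rw [hw ij, pow_succ']
      exact mul_dvd_mul dvd_rfl (IHk w hEw ij)
  -- clear denominators
  obtain ⟨b, hb⟩ := IsLocalization.exist_integer_multiples_of_finite
    (nonZeroDivisors O) y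
  choose z hzeq using hb
  have hbne : algebraMap O K (b : O) ≠ 0 := by
    intro h
    exact nonZeroDivisors.coe_ne_zero b (IsFractionRing.injective O K (by simpa using h))
  have hzval : ∀ ij, algebraMap O K (z ij) = algebraMap O K (b : O) * y ij := by
    intro ij
    rw [hzeq ij, Algebra.smul_def]
  have hEz : E z := by
    apply IsFractionRing.injective O K
    rw [map_sum, map_zero]
    have : ∀ ij : Fin d × Fin n,
        algebraMap O K (π ^ (ij.1 : ℕ) * a ij.2 * z ij ^ d) =
          algebraMap O K (b : O) ^ d *
            (algebraMap O K π ^ (ij.1 : ℕ) * algebraMap O K (a ij.2) * y ij ^ d) := by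
      intro ij
      rw [map_mul, map_mul, map_pow, map_pow, hzval ij]
      ring
    rw [Finset.sum_congr rfl fun ij _ => this ij, ← Finset.mul_sum, hsum, mul_zero]
  -- pick a nonzero coordinate
  obtain ⟨ij0, hij0⟩ := Function.ne_iff.mp hy
  have hz0 : z ij0 ≠ 0 := by
    intro h
    apply hij0
    have h2 := hzval ij0
    rw [h, map_zero] at h2
    have h4 := (mul_eq_zero.mp h2.symm).resolve_left hbne
    simpa using h4
  obtain ⟨m, u, hmu⟩ := IsDiscreteValuationRing.associated_pow_irreducible hz0 hπ
  have hdm : π ^ (m + 1) ∣ z ij0 := keyk (m + 1) z hEz ij0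
  have hdvd2 : π ^ (m + 1) ∣ π ^ m := hmu ▸ hdm.mul_right (u : O)
  have h5 : π ^ m * π ∣ π ^ m * 1 := by
    rw [← pow_succ, mul_one]
    exact hdvd2
  have hπu : π ∣ 1 := (mul_dvd_mul_iff_left (pow_ne_zero m hπ0)).mp h5
  exact hπ.not_isUnit (isUnit_of_dvd_one hπu)
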